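/- Let d ≥ 1, γ ∈ (0,1], 0 < α ≤ 1/γ, Δ ∈ (0,1], C > 0 and ρ̄ > 0. Set a₀ := (Δ^{α/d}, …, Δ^{α/d}) ∈ ℝ^d and define φ₀ : ℝ^d → ℝ by φ₀(x) = 1/2 − C·min{Δ, Δ^{αγ/d}·ψ̃_γ(Δ^{−α/d}·(x − a₀))}, where ψ̃_γ(u) = (1 − ‖u‖_∞)^γ if ‖u‖_∞ ≤ 1 and 0 otherwise. Let μ be a measure on ℝ^d satisfying μ(A) ≤ ρ̄·λ(A ∩ [0,1]^d) for every Borel set A, where λ is Lebesgue measure. Then for every δ ∈ (0,1], μ{x ∈ ℝ^d : 0 < |φ₀(x) − 1/2| ≤ δ} ≤ 2^d · d · ρ̄ · C^{−α} · δ^α. -/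

import Mathlib

open MeasureTheory

/-- The bump function `ψ̃_γ(u) = (1 - ‖u‖_∞)^γ` for `‖u‖_∞ ≤ 1`, `0` otherwise. -/
noncomputable def psiTilde (d : ℕ) (γ : ℝ) (u : Fin d → ℝ) : ℝ :=
  if ‖u‖ ≤ 1 then (1 - ‖u‖) ^ γ else 0

/-- The nominal payoff function
`φ₀(x) = 1/2 − C · min {Δ, Δ^{αγ/d} · ψ̃_γ(Δ^{−α/d} (x − a₀))}`, where
`a₀ = (Δ^{α/d}, …, Δ^{α/d})`. -/
noncomputable def phi0 (d : ℕ) (γ α Δ C : ℝ) (x : Fin d → ℝ) : ℝ :=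
  1 / 2 - C * min Δ (Δ ^ (α * γ / (d : ℝ)) *
    psiTilde d γ (Δ ^ (-(α / (d : ℝ))) • (x - fun _ => Δ ^ (α / (d : ℝ)))))

/-- Volume of a sup-ball in `Fin d → ℝ`. -/
lemma vol_ball_pi (d : ℕ) (hd : 1 ≤ d) (a : Fin d → ℝ) (ρ : ℝ) (hρ : 0 ≤ ρ) :
    volume (Metric.ball a ρ) = ENNReal.ofReal ((2 * ρ) ^ d) := by
  rcases hρ.eq_or_lt with h | h
  · rw [← h]
    simp [Metric.ball_zero, zero_pow (by omega : d ≠ 0)]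
  · rw [ball_pi _ h, volume_pi_pi]
    simp only [Real.volume_ball]
    rw [Finset.prod_const, Finset.card_univ, Fintype.card_fin,
      ← ENNReal.ofReal_pow (by linarith : (0:ℝ) ≤ 2 * ρ)]

/-- Volume of a closed sup-ball in `Fin d → ℝ`. -/
lemma vol_closedBall_pi (d : ℕ) (a : Fin d → ℝ) (ρ : ℝ) (hρ : 0 ≤ ρ) :
    volume (Metric.closedBall a ρ) = ENNReal.ofReal ((2 * ρ) ^ d) := by
  rw [closedBall_pi _ hρ, volume_pi_pi]
  simp only [Real.volume_closedBall]
  rw [Finset.prod_const, Finset.card_univ, Fintype.card_fin,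
    ← ENNReal.ofReal_pow (by linarith : (0:ℝ) ≤ 2 * ρ)]

/-- **Margin condition for the nominal instance.** If `γ ∈ (0,1]`, `0 < α ≤ 1/γ`,
`Δ ∈ (0,1]`, `C > 0`, and `μ` is dominated by `ρ̄` times Lebesgue measure on `[0,1]^d`,
then for every `δ ∈ (0,1]`,
`μ {x : 0 < |φ₀(x) − 1/2| ≤ δ} ≤ 2^d · d · ρ̄ · C^{−α} · δ^α`. -/
theorem phi0_margin_condition (d : ℕ) (hd : 1 ≤ d) (γ α Δ C ρhi : ℝ)
    (hγ0 : 0 < γ) (hγ1 : γ ≤ 1) (hα0 : 0 < α) (hαγ : α ≤ 1 / γ)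
    (hΔ0 : 0 < Δ) (hΔ1 : Δ ≤ 1) (hC : 0 < C) (hρ : 0 < ρhi)
    (μ : Measure (Fin d → ℝ))
    (hμ : ∀ A : Set (Fin d → ℝ), MeasurableSet A →
      μ A ≤ ENNReal.ofReal ρhi * volume (A ∩ Set.Icc (0 : Fin d → ℝ) 1)) :
    ∀ δ ∈ Set.Ioc (0 : ℝ) 1,
      μ {x : Fin d → ℝ | 0 < |phi0 d γ α Δ C x - 1 / 2| ∧ |phi0 d γ α Δ C x - 1 / 2| ≤ δ}
        ≤ ENNReal.ofReal ((2 : ℝ) ^ d * (d : ℝ) * ρhi * C ^ (-α) * δ ^ α) := by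
  intro δ hδ
  obtain ⟨hδ0, hδ1⟩ := hδ
  have hd0 : (0:ℝ) < (d:ℝ) := by exact_mod_cast Nat.lt_of_lt_of_le Nat.zero_lt_one hd
  have hd1 : (1:ℝ) ≤ (d:ℝ) := by exact_mod_cast hd
  set r : ℝ := Δ ^ (α / (d:ℝ)) with hr
  have hr0 : 0 < r := Real.rpow_pos_of_pos hΔ0 _
  set a : Fin d → ℝ := fun _ => r with ha
  have hdc0 : 0 < δ / C := div_pos hδ0 hC
  have hαγ1 : α * γ ≤ 1 := (le_div_iff₀ hγ0).mp hαγ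
  set t : ℝ := if C * Δ ≤ δ then 1 else ((δ / C) * Δ ^ (-(α * γ / (d:ℝ)))) ^ (1/γ) with ht
  have ht0 : 0 < t := by
    rw [ht]; split_ifs with h
    · norm_num
    · exact Real.rpow_pos_of_pos (mul_pos hdc0 (Real.rpow_pos_of_pos hΔ0 _)) _
  have hexp1 : α * γ / (d:ℝ) ≤ 1 := by
    rw [div_le_one hd0]; linarith
  have ht1 : t ≤ 1 := by
    rw [ht]; split_ifs with h
    · exact le_refl 1
    · have h1 : δ / C < Δ := (div_lt_iff₀ hC).mpr (by rw [mul_comm]; exact not_le.mp h)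
      have h2 : Δ ≤ Δ ^ (α * γ / (d:ℝ)) := by
        have := Real.rpow_le_rpow_of_exponent_ge hΔ0 hΔ1 hexp1
        rwa [Real.rpow_one] at this
      have h3 : (0:ℝ) < Δ ^ (-(α * γ / (d:ℝ))) := Real.rpow_pos_of_pos hΔ0 _
      have hbase : (δ / C) * Δ ^ (-(α * γ / (d:ℝ))) ≤ 1 := by
        calc (δ / C) * Δ ^ (-(α * γ / (d:ℝ)))
            ≤ Δ ^ (α * γ / (d:ℝ)) * Δ ^ (-(α * γ / (d:ℝ))) :=
              mul_le_mul_of_nonneg_right (le_trans h1.le h2) h3.le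
          _ = 1 := by rw [← Real.rpow_add hΔ0]; simp
      exact Real.rpow_le_one (mul_nonneg hdc0.le h3.le) hbase (by positivity)
  -- containment in a shell
  set E : Set (Fin d → ℝ) := Metric.closedBall a r \ Metric.ball a (r * (1 - t)) with hE
  have hsub : {x : Fin d → ℝ | 0 < |phi0 d γ α Δ C x - 1 / 2| ∧
      |phi0 d γ α Δ C x - 1 / 2| ≤ δ} ⊆ E := by
    rintro x ⟨hx1, hx2⟩
    set u : Fin d → ℝ := Δ ^ (-(α / (d:ℝ))) • (x - a) with hu
    have hnu : ‖x - a‖ = r * ‖u‖ := by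
      rw [hu, norm_smul, Real.norm_eq_abs,
        abs_of_pos (Real.rpow_pos_of_pos hΔ0 _), Real.rpow_neg hΔ0.le, hr]
      field_simp
    set m : ℝ := min Δ (Δ ^ (α * γ / (d:ℝ)) * psiTilde d γ u) with hm
    have hphi : phi0 d γ α Δ C x - 1 / 2 = -(C * m) := by
      simp only [hm, hu, ha, hr, phi0]; ring
    rw [hphi, abs_neg] at hx1 hx2
    have hψnn : 0 ≤ psiTilde d γ u := by
      rw [psiTilde]; split_ifs with h
      · exact Real.rpow_nonneg (by linarith) γ
      · exact le_refl 0
    have hm0 : 0 ≤ m := le_min hΔ0.le (mul_nonneg (Real.rpow_nonneg hΔ0.le _) hψnn)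
    rw [abs_of_nonneg (mul_nonneg hC.le hm0)] at hx1 hx2
    have hmpos : 0 < m := by
      rcases hm0.eq_or_lt with h | h
      · rw [← h] at hx1; simp at hx1
      · exact h
    have hXpos : 0 < Δ ^ (α * γ / (d:ℝ)) * psiTilde d γ u := (lt_min_iff.mp hmpos).2
    have hψpos : 0 < psiTilde d γ u := by
      by_contra hcon
      push_neg at hcon
      nlinarith [Real.rpow_pos_of_pos hΔ0 (α * γ / (d:ℝ))]
    have hψsplit : ‖u‖ ≤ 1 ∧ 0 < (1 - ‖u‖) ^ γ := by
      rw [psiTilde] at hψpos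
      split_ifs at hψpos with h
      · exact ⟨h, hψpos⟩
      · exact absurd hψpos (lt_irrefl 0)
    obtain ⟨hule, hppos⟩ := hψsplit
    have hult : ‖u‖ < 1 := by
      rcases hule.lt_or_eq with h | h
      · exact h
      · exfalso; rw [h] at hppos; simp [Real.zero_rpow hγ0.ne'] at hppos
    have h1u0 : (0:ℝ) ≤ 1 - ‖u‖ := by linarith
    have hkey : 1 - ‖u‖ ≤ t := by
      rw [ht]; split_ifs with hcase
      · linarith [norm_nonneg u]
      · have hmle : m ≤ δ / C := (le_div_iff₀ hC).mpr (by rw [mul_comm]; exact hx2)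
        have hδCΔ : δ / C < Δ := (div_lt_iff₀ hC).mpr (by rw [mul_comm]; exact not_le.mp hcase)
        have hXle : Δ ^ (α * γ / (d:ℝ)) * (1 - ‖u‖) ^ γ ≤ δ / C := by
          have h' := hmle
          rw [hm] at h'
          rcases min_le_iff.mp h' with h | h
          · linarith
          · rwa [psiTilde, if_pos hule] at h
        have h3 : (0:ℝ) < Δ ^ (α * γ / (d:ℝ)) := Real.rpow_pos_of_pos hΔ0 _
        have h2 : (1 - ‖u‖) ^ γ ≤ (δ / C) * Δ ^ (-(α * γ / (d:ℝ))) := by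
          rw [Real.rpow_neg hΔ0.le]
          calc (1 - ‖u‖) ^ γ
              = (Δ ^ (α * γ / (d:ℝ)) * (1 - ‖u‖) ^ γ) * (Δ ^ (α * γ / (d:ℝ)))⁻¹ := by
                field_simp
            _ ≤ (δ / C) * (Δ ^ (α * γ / (d:ℝ)))⁻¹ :=
                mul_le_mul_of_nonneg_right hXle (inv_nonneg.mpr h3.le)
        have hid : 1 - ‖u‖ = ((1 - ‖u‖) ^ γ) ^ (1/γ) := by
          rw [← Real.rpow_mul h1u0, mul_one_div_cancel hγ0.ne', Real.rpow_one]
        rw [hid]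
        exact Real.rpow_le_rpow (Real.rpow_nonneg h1u0 γ) h2 (by positivity)
    constructor
    · rw [Metric.mem_closedBall, dist_eq_norm, hnu]
      calc r * ‖u‖ ≤ r * 1 := mul_le_mul_of_nonneg_left hule hr0.le
        _ = r := mul_one r
    · rw [Metric.mem_ball, dist_eq_norm, hnu, not_lt]
      have : 1 - t ≤ ‖u‖ := by linarith
      exact mul_le_mul_of_nonneg_left this hr0.le
  -- volume of shell
  have hrs0 : (0:ℝ) ≤ r * (1 - t) := mul_nonneg hr0.le (by linarith)
  have hsub2 : Metric.ball a (r * (1 - t)) ⊆ Metric.closedBall a r :=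
    le_trans Metric.ball_subset_closedBall
      (Metric.closedBall_subset_closedBall (by nlinarith))
  have hvball := vol_ball_pi d hd a (r * (1 - t)) hrs0
  have hvcb := vol_closedBall_pi d a r hr0.le
  have hvolE : volume E ≤ ENNReal.ofReal ((d:ℝ) * t * (2 * r) ^ d) := by
    rw [hE, measure_diff hsub2 measurableSet_ball.nullMeasurableSet
      (by rw [hvball]; exact ENNReal.ofReal_ne_top), hvcb, hvball,
      ← ENNReal.ofReal_sub _ (by positivity)]
    apply ENNReal.ofReal_le_ofReal
    have hb : 1 - (d:ℝ) * t ≤ (1 - t) ^ d := by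
      have h := one_add_mul_le_pow (show (-2:ℝ) ≤ -t by linarith) d
      rw [show (1:ℝ) - t = 1 + -t by ring]
      linarith
    have hsplit : (2 * (r * (1 - t))) ^ d = (2 * r) ^ d * (1 - t) ^ d := by
      rw [← mul_pow]; congr 1; ring
    rw [hsplit]
    nlinarith [mul_le_mul_of_nonneg_left hb (pow_nonneg (by linarith : (0:ℝ) ≤ 2 * r) d)]
  -- final real inequality
  have hrd : r ^ d = Δ ^ α := by
    rw [← Real.rpow_natCast r d, hr, ← Real.rpow_mul hΔ0.le, div_mul_cancel₀ α hd0.ne']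
  have hdivrpow : (δ / C) ^ α = C ^ (-α) * δ ^ α := by
    rw [Real.div_rpow hδ0.le hC.le, Real.rpow_neg hC.le]; ring
  have hkey2 : t * Δ ^ α ≤ C ^ (-α) * δ ^ α := by
    rw [ht]; split_ifs with hcase
    · have h1 : Δ ≤ δ / C := (le_div_iff₀ hC).mpr (by rw [mul_comm]; exact hcase)
      rw [one_mul, ← hdivrpow]
      exact Real.rpow_le_rpow hΔ0.le h1 hα0.le
    · have hδCΔ : δ / C < Δ := (div_lt_iff₀ hC).mpr (by rw [mul_comm]; exact not_le.mp hcase)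
      have hdc1 : δ / C ≤ 1 := le_trans hδCΔ.le hΔ1
      have htval : ((δ / C) * Δ ^ (-(α * γ / (d:ℝ)))) ^ (1/γ)
          = (δ / C) ^ (1/γ) * Δ ^ (-(α / (d:ℝ))) := by
        rw [Real.mul_rpow hdc0.le (Real.rpow_nonneg hΔ0.le _),
          ← Real.rpow_mul hΔ0.le,
          show -(α * γ / (d:ℝ)) * (1/γ) = -(α / (d:ℝ)) by field_simp]
      rw [htval]
      have e1 : Δ ^ (-(α / (d:ℝ))) * Δ ^ α = Δ ^ (α - α / (d:ℝ)) := by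
        rw [← Real.rpow_add hΔ0]; ring_nf
      calc (δ / C) ^ (1/γ) * Δ ^ (-(α / (d:ℝ))) * Δ ^ α
          = (δ / C) ^ (1/γ) * Δ ^ (α - α / (d:ℝ)) := by rw [mul_assoc, e1]
        _ ≤ (δ / C) ^ α * 1 := by
            apply mul_le_mul (Real.rpow_le_rpow_of_exponent_ge hdc0 hdc1 hαγ)
              (Real.rpow_le_one hΔ0.le hΔ1 (sub_nonneg.mpr (div_le_self hα0.le hd1)))
              (Real.rpow_nonneg hΔ0.le _) (Real.rpow_nonneg hdc0.le _)
        _ = (δ / C) ^ α := mul_one _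
        _ = C ^ (-α) * δ ^ α := hdivrpow
  have hreal : ρhi * ((d:ℝ) * t * (2 * r) ^ d)
      ≤ (2:ℝ) ^ d * (d:ℝ) * ρhi * C ^ (-α) * δ ^ α := by
    calc ρhi * ((d:ℝ) * t * (2 * r) ^ d)
        = ((2:ℝ) ^ d * (d:ℝ) * ρhi) * (t * Δ ^ α) := by rw [mul_pow, hrd]; ring
      _ ≤ ((2:ℝ) ^ d * (d:ℝ) * ρhi) * (C ^ (-α) * δ ^ α) :=
          mul_le_mul_of_nonneg_left hkey2 (by positivity)
      _ = (2:ℝ) ^ d * (d:ℝ) * ρhi * C ^ (-α) * δ ^ α := by ring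
  have hEmeas : MeasurableSet E := measurableSet_closedBall.diff measurableSet_ball
  calc μ {x : Fin d → ℝ | 0 < |phi0 d γ α Δ C x - 1 / 2| ∧ |phi0 d γ α Δ C x - 1 / 2| ≤ δ}
      ≤ μ E := measure_mono hsub
    _ ≤ ENNReal.ofReal ρhi * volume (E ∩ Set.Icc (0 : Fin d → ℝ) 1) := hμ E hEmeas
    _ ≤ ENNReal.ofReal ρhi * volume E :=
        mul_le_mul_right (measure_mono Set.inter_subset_left) _
    _ ≤ ENNReal.ofReal ρhi * ENNReal.ofReal ((d:ℝ) * t * (2 * r) ^ d) :=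
        mul_le_mul_right hvolE _
    _ = ENNReal.ofReal (ρhi * ((d:ℝ) * t * (2 * r) ^ d)) := (ENNReal.ofReal_mul hρ.le).symm
    _ ≤ ENNReal.ofReal ((2:ℝ) ^ d * (d:ℝ) * ρhi * C ^ (-α) * δ ^ α) :=
        ENNReal.ofReal_le_ofReal hreal
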